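/- Define ρ : ℤ³ → SU(2) on generators by ρ(1,0,0) = A, ρ(0,1,0) = cos(√2 π)·I + sin(√2 π)·A, ρ(0,0,1) = cos(√3 π)·I + sin(√3 π)·A, where A = (1/√2)·[[i,1],[-1,-i]]. Then for every finite-index subgroup Γ' ≤ ℤ³, the image ρ(Γ') is infinite. -/

import Mathlib

open Matrix Complex

/-- Let `ρ : ℤ³ → SU(2)` be the homomorphism with `ρ(1,0,0) = A`,
`ρ(0,1,0) = cos(√2π)·I + sin(√2π)·A`, `ρ(0,0,1) = cos(√3π)·I + sin(√3π)·A`, where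
`A = (1/√2)·[[i,1],[-1,-i]]`.  Then the image of every finite-index subgroup of `ℤ³`
under `ρ` is infinite. -/
theorem image_of_finite_index_subgroup_infinite
    (A : Matrix (Fin 2) (Fin 2) ℂ)
    (hA : A = ((Real.sqrt 2 : ℂ))⁻¹ • !![I, 1; -1, -I])
    (ρ : ℤ × ℤ × ℤ → Matrix (Fin 2) (Fin 2) ℂ)
    (hhom : ∀ s t : ℤ × ℤ × ℤ, ρ (s + t) = ρ s * ρ t)
    (h1 : ρ (1, 0, 0) = A)
    (h2 : ρ (0, 1, 0) =
      (Real.cos (Real.sqrt 2 * Real.pi) : ℂ) • (1 : Matrix (Fin 2) (Fin 2) ℂ) +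
      (Real.sin (Real.sqrt 2 * Real.pi) : ℂ) • A)
    (h3 : ρ (0, 0, 1) =
      (Real.cos (Real.sqrt 3 * Real.pi) : ℂ) • (1 : Matrix (Fin 2) (Fin 2) ℂ) +
      (Real.sin (Real.sqrt 3 * Real.pi) : ℂ) • A) :
    ∀ Γ' : AddSubgroup (ℤ × ℤ × ℤ), Γ'.FiniteIndex → (ρ '' (Γ' : Set (ℤ × ℤ × ℤ))).Infinite := by
  intro Γ' hΓ'
  set α : ℝ := Real.sqrt 2 * Real.pi with hα
  -- A squares to -1
  have hsq2 : ((Real.sqrt 2 : ℝ) : ℂ) ^ 2 = 2 := by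
    rw [← Complex.ofReal_pow, Real.sq_sqrt (by norm_num)]; norm_num
  have hAA : A * A = -1 := by
    rw [hA, Matrix.smul_mul, Matrix.mul_smul, smul_smul]
    ext i j
    fin_cases i <;> fin_cases j <;>
      simp [Matrix.mul_apply, Fin.sum_univ_two, Matrix.one_apply] <;>
      field_simp <;> linear_combination hsq2
  -- multiplication rule for rotations
  have key : ∀ a b c d : ℝ,
      ((a:ℂ) • (1 : Matrix (Fin 2) (Fin 2) ℂ) + (b:ℂ) • A) *
        ((c:ℂ) • (1 : Matrix (Fin 2) (Fin 2) ℂ) + (d:ℂ) • A) =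
      ((a*c - b*d : ℝ) : ℂ) • 1 + ((a*d + b*c : ℝ) : ℂ) • A := by
    intro a b c d
    push_cast
    simp only [add_mul, mul_add, Matrix.smul_mul, Matrix.mul_smul, hAA, one_mul, mul_one]
    module
  -- formula for ρ(0, n, 0), n ≥ 1
  have form : ∀ n : ℕ, 1 ≤ n → ρ (0, (n : ℤ), 0) =
      (Real.cos (n * α) : ℂ) • (1 : Matrix (Fin 2) (Fin 2) ℂ) + (Real.sin (n * α) : ℂ) • A := by
    intro n hn
    induction n, hn using Nat.le_induction with
    | base => simpa using h2
    | succ n hn ih =>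
      have hstep : ((0, ((n : ℤ)), 0) : ℤ × ℤ × ℤ) + (0, 1, 0) = (0, ((n : ℤ) + 1), 0) := by
        simp [Prod.ext_iff]
      have := hhom (0, (n : ℤ), 0) (0, 1, 0)
      rw [hstep] at this
      have hn1 : (((n + 1 : ℕ) : ℤ)) = (n : ℤ) + 1 := by push_cast; ring
      rw [hn1, this, ih, h2, key]
      have hn' : ((n + 1 : ℕ) : ℝ) = (n : ℝ) + 1 := by push_cast; ring
      have hcc : Real.cos ((n : ℝ) * α) * Real.cos α - Real.sin ((n : ℝ) * α) * Real.sin α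
          = Real.cos (((n + 1 : ℕ) : ℝ) * α) := by
        rw [hn', add_mul, one_mul, Real.cos_add]
      have hss : Real.cos ((n : ℝ) * α) * Real.sin α + Real.sin ((n : ℝ) * α) * Real.cos α
          = Real.sin (((n + 1 : ℕ) : ℝ) * α) := by
        rw [hn', add_mul, one_mul, Real.sin_add]; ring
      rw [hcc, hss]
  -- the index
  set N : ℕ := Γ'.index with hNdef
  have hN : N ≠ 0 := hΓ'.index_ne_zero
  -- membership of (0, (k+1)*N, 0)
  have hmem : ∀ k : ℕ, ((0 : ℤ), (((k + 1) * N : ℕ) : ℤ), (0 : ℤ)) ∈ Γ' := by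
    intro k
    have hg : N • ((0, 1, 0) : ℤ × ℤ × ℤ) ∈ Γ' := AddSubgroup.nsmul_index_mem Γ' _
    have := Γ'.nsmul_mem hg (k + 1)
    have heq : (k + 1) • (N • ((0, 1, 0) : ℤ × ℤ × ℤ)) =
        ((0 : ℤ), (((k + 1) * N : ℕ) : ℤ), (0 : ℤ)) := by
      rw [smul_smul]
      simp [Prod.ext_iff, nsmul_eq_mul]
    rwa [heq] at this
  -- the injection
  have hpos : ∀ k : ℕ, 1 ≤ (k + 1) * N := by
    intro k
    exact Nat.one_le_iff_ne_zero.mpr (by positivity)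
  apply Set.infinite_of_injective_forall_mem
    (f := fun k : ℕ => ρ ((0 : ℤ), (((k + 1) * N : ℕ) : ℤ), (0 : ℤ)))
  · intro k1 k2 hk
    by_contra hne
    set a : ℕ := (k1 + 1) * N
    set b : ℕ := (k2 + 1) * N
    have hk' : ρ ((0 : ℤ), ((a : ℕ) : ℤ), (0 : ℤ)) = ρ ((0 : ℤ), ((b : ℕ) : ℤ), (0 : ℤ)) := hk
    rw [form a (hpos k1), form b (hpos k2)] at hk'
    have h00 := congrFun (congrFun hk' 0) 0
    have hA00 : A 0 0 = ((Real.sqrt 2 : ℝ) : ℂ)⁻¹ * I := by rw [hA]; simp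
    simp only [Matrix.add_apply, Matrix.smul_apply, Matrix.one_apply_eq, smul_eq_mul,
      mul_one, hA00] at h00
    have hs2ne : (Real.sqrt 2 : ℝ) ≠ 0 := by positivity
    set c1 := Real.cos ((a : ℝ) * α) with hc1
    set s1 := Real.sin ((a : ℝ) * α) with hs1
    set c2 := Real.cos ((b : ℝ) * α) with hc2
    set s2 := Real.sin ((b : ℝ) * α) with hs2
    have hre := congrArg Complex.re h00
    have him := congrArg Complex.im h00
    simp only [Complex.add_re, Complex.add_im, Complex.mul_re, Complex.mul_im,
      Complex.ofReal_re, Complex.ofReal_im, Complex.I_re, Complex.I_im,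
      Complex.inv_re, Complex.inv_im] at hre him
    have hsq2' : Real.sqrt 2 * Real.sqrt 2 = 2 := Real.mul_self_sqrt (by norm_num)
    have hs2pos : (0:ℝ) < Real.sqrt 2 := by positivity
    have hcos : c1 = c2 := by
      simp only [Complex.normSq_ofReal, hsq2'] at hre
      field_simp at hre
      nlinarith [hre, hsq2', hs2pos]
    have hsin : s1 = s2 := by
      simp only [Complex.normSq_ofReal, hsq2'] at him
      field_simp at him
      nlinarith [him, hsq2', hs2pos]
    have hexp : Complex.exp (((a : ℝ) * α : ℝ) * I) = Complex.exp (((b : ℝ) * α : ℝ) * I) := by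
      rw [Complex.exp_mul_I, Complex.exp_mul_I, ← Complex.ofReal_cos, ← Complex.ofReal_cos,
        ← Complex.ofReal_sin, ← Complex.ofReal_sin, ← hc1, ← hs1, ← hc2, ← hs2, hcos, hsin]
    obtain ⟨n, hn⟩ := Complex.exp_eq_exp_iff_exists_int.mp hexp
    have hI : (((a : ℝ) * α : ℝ) : ℂ) * I = ((((b : ℝ) * α : ℝ) : ℂ) + (n : ℂ) * (2 * Real.pi)) * I := by
      rw [hn]; push_cast; ring
    have hC : (((a : ℝ) * α : ℝ) : ℂ) = (((b : ℝ) * α : ℝ) : ℂ) + (n : ℂ) * (2 * Real.pi) :=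
      mul_right_cancel₀ Complex.I_ne_zero hI
    have hR : (a : ℝ) * α = (b : ℝ) * α + (n : ℝ) * (2 * Real.pi) := by
      exact_mod_cast hC
    have hab : (a : ℝ) ≠ (b : ℝ) := by
      intro h
      have : a = b := Nat.cast_injective h
      have : k1 + 1 = k2 + 1 := Nat.eq_of_mul_eq_mul_right (Nat.pos_of_ne_zero hN) this
      omega
    have hpi : Real.pi ≠ 0 := Real.pi_ne_zero
    -- (a - b) * √2 * π = 2 n π  ⇒  √2 = 2n/(a-b)
    have hkey : ((a : ℝ) - b) * Real.sqrt 2 = 2 * n := by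
      have : ((a : ℝ) - b) * Real.sqrt 2 * Real.pi = 2 * n * Real.pi := by
        rw [hα] at hR; ring_nf; ring_nf at hR; linarith [hR]
      exact mul_right_cancel₀ hpi this
    have habne : ((a : ℝ) - b) ≠ 0 := sub_ne_zero.mpr hab
    have hrat : Real.sqrt 2 = (((2 * n : ℚ) / ((a : ℚ) - b) : ℚ) : ℝ) := by
      push_cast
      rw [eq_div_iff habne, mul_comm]
      exact hkey
    exact irrational_sqrt_two ⟨(2 * n : ℚ) / ((a : ℚ) - b), hrat.symm⟩
  · intro k
    exact Set.mem_image_of_mem ρ (hmem k)
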